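/- For every k ≥ 1 and every index i, the function h ↦ CN_{k+1}(h)_i − CN_k(h)_i is O(h²) as h → 0 from the right; i.e., each additional constant-neighbour iteration modifies only terms of order at least two in the step size (Appendix A, point B). -/

import Mathlib

open Finset NormedSpace Asymptotics

/-- `aCoef M Q v i = Σ_{j≠i} M_ij v_j + Q_i`. -/
noncomputable def aCoef {N : ℕ} (M : Matrix (Fin N) (Fin N) ℝ) (Q : Fin N → ℝ)
    (v : Fin N → ℝ) (i : Fin N) : ℝ :=
  (∑ j ∈ Finset.univ.erase i, M i j * v j) + Q i

/-- The constant-neighbour step `F_h`. -/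
noncomputable def cnStep {N : ℕ} (M : Matrix (Fin N) (Fin N) ℝ) (Q u0 : Fin N → ℝ)
    (h : ℝ) (v : Fin N → ℝ) : Fin N → ℝ :=
  fun i => u0 i * Real.exp (M i i * h)
    + (aCoef M Q v i / (-(M i i))) * (1 - Real.exp (M i i * h))

/-- The `k`-stage constant-neighbour approximation `CN_k(h) = F_h^[k] u⁰`. -/
noncomputable def CN {N : ℕ} (M : Matrix (Fin N) (Fin N) ℝ) (Q u0 : Fin N → ℝ)
    (k : ℕ) (h : ℝ) : Fin N → ℝ :=
  (cnStep M Q u0 h)^[k] u0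

/-- The effective slope `s_i(v) = (a_i(v) − a_i(u⁰))/h`. -/
noncomputable def sCoef {N : ℕ} (M : Matrix (Fin N) (Fin N) ℝ) (Q u0 : Fin N → ℝ)
    (h : ℝ) (v : Fin N → ℝ) (i : Fin N) : ℝ :=
  (aCoef M Q v i - aCoef M Q u0 i) / h

/-- The linear-neighbour step `G_h`, with `τ_i = −1/M_ii`. -/
noncomputable def lnStep {N : ℕ} (M : Matrix (Fin N) (Fin N) ℝ) (Q u0 : Fin N → ℝ)
    (h : ℝ) (v : Fin N → ℝ) : Fin N → ℝ :=
  fun i =>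
    u0 i * Real.exp (M i i * h)
      + (aCoef M Q u0 i * (-(M i i)⁻¹) - sCoef M Q u0 h v i * (-(M i i)⁻¹) ^ 2)
          * (1 - Real.exp (M i i * h))
      + sCoef M Q u0 h v i * (-(M i i)⁻¹) * h

/-- The `k`-stage linear-neighbour approximation `LN_k(h) = G_h^[k−1] (CN_1(h))`, `k ≥ 2`. -/
noncomputable def LN {N : ℕ} (M : Matrix (Fin N) (Fin N) ℝ) (Q u0 : Fin N → ℝ)
    (k : ℕ) (h : ℝ) : Fin N → ℝ :=
  (lnStep M Q u0 h)^[k - 1] (cnStep M Q u0 h u0)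

/-- The exact solution `u_ex(h) = e^{hM} u⁰ + ∫₀^h e^{(h−s)M} Q ds`. -/
noncomputable def uex {N : ℕ} (M : Matrix (Fin N) (Fin N) ℝ) (Q u0 : Fin N → ℝ)
    (h : ℝ) : Fin N → ℝ :=
  (exp (h • M)).mulVec u0 + ∫ s in (0:ℝ)..h, (exp ((h - s) • M)).mulVec Q

section Aux

lemma exp_term_nonneg {m h : ℝ} (hm : m < 0) (hh : 0 ≤ h) :
    0 ≤ 1 - Real.exp (m * h) := by
  have : Real.exp (m * h) ≤ 1 := by
    rw [show (1:ℝ) = Real.exp 0 by simp]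
    exact Real.exp_le_exp.mpr (mul_nonpos_of_nonpos_of_nonneg hm.le hh)
  linarith

lemma exp_term_le {m h : ℝ} : 1 - Real.exp (m * h) ≤ -m * h := by
  have := Real.add_one_le_exp (m * h)
  linarith

lemma aCoef_diff_bound {N : ℕ} (M : Matrix (Fin N) (Fin N) ℝ) (Q : Fin N → ℝ)
    (v w : Fin N → ℝ) (i : Fin N) :
    |aCoef M Q v i - aCoef M Q w i| ≤ (∑ p, ∑ j, |M p j|) * ‖v - w‖ := by
  have h1 : aCoef M Q v i - aCoef M Q w i
      = ∑ j ∈ Finset.univ.erase i, M i j * (v j - w j) := by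
    simp [aCoef, mul_sub, Finset.sum_sub_distrib]
  rw [h1]
  calc |∑ j ∈ Finset.univ.erase i, M i j * (v j - w j)|
      ≤ ∑ j ∈ Finset.univ.erase i, |M i j * (v j - w j)| := Finset.abs_sum_le_sum_abs _ _
    _ ≤ ∑ j ∈ Finset.univ.erase i, |M i j| * ‖v - w‖ := by
        apply Finset.sum_le_sum
        intro j _
        rw [abs_mul]
        have hj : |v j - w j| ≤ ‖v - w‖ := by
          simpa using norm_le_pi_norm (v - w) j
        exact mul_le_mul_of_nonneg_left hj (abs_nonneg _)
    _ = (∑ j ∈ Finset.univ.erase i, |M i j|) * ‖v - w‖ := by rw [Finset.sum_mul]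
    _ ≤ (∑ p, ∑ j, |M p j|) * ‖v - w‖ := by
        gcongr
        calc ∑ j ∈ Finset.univ.erase i, |M i j| ≤ ∑ j, |M i j| :=
              Finset.sum_le_sum_of_subset_of_nonneg (Finset.erase_subset _ _)
                (fun j _ _ => abs_nonneg _)
          _ ≤ ∑ p, ∑ j, |M p j| :=
              Finset.single_le_sum (f := fun p => ∑ j, |M p j|)
                (fun p _ => Finset.sum_nonneg fun j _ => abs_nonneg _) (Finset.mem_univ i)

lemma step_lip {N : ℕ} (M : Matrix (Fin N) (Fin N) ℝ) (hM : ∀ i, M i i < 0)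
    (Q u0 : Fin N → ℝ) {h : ℝ} (hh : 0 ≤ h) (v w : Fin N → ℝ) :
    ‖cnStep M Q u0 h v - cnStep M Q u0 h w‖
      ≤ ((∑ p, ∑ j, |M p j|) * h) * ‖v - w‖ := by
  have hC : 0 ≤ ∑ p, ∑ j, |M p j| :=
    Finset.sum_nonneg fun p _ => Finset.sum_nonneg fun j _ => abs_nonneg _
  have hRHS : 0 ≤ ((∑ p, ∑ j, |M p j|) * h) * ‖v - w‖ := by positivity
  rw [pi_norm_le_iff_of_nonneg hRHS]
  intro i
  have hm := hM i
  have key : (cnStep M Q u0 h v - cnStep M Q u0 h w) i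
      = ((aCoef M Q v i - aCoef M Q w i) / (-(M i i))) * (1 - Real.exp (M i i * h)) := by
    simp [cnStep, sub_div]; ring
  rw [Real.norm_eq_abs, key, abs_mul, abs_div]
  have hE0 : 0 ≤ 1 - Real.exp (M i i * h) := exp_term_nonneg hm hh
  have hE1 : 1 - Real.exp (M i i * h) ≤ -(M i i) * h := exp_term_le
  have hmpos : (0:ℝ) < -(M i i) := by linarith
  rw [abs_of_nonneg hE0, abs_of_pos hmpos]
  calc |aCoef M Q v i - aCoef M Q w i| / (-(M i i)) * (1 - Real.exp (M i i * h))
      ≤ |aCoef M Q v i - aCoef M Q w i| / (-(M i i)) * (-(M i i) * h) := by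
        gcongr
        try positivity
    _ = |aCoef M Q v i - aCoef M Q w i| * h := by
        have hne : M i i ≠ 0 := hm.ne
        field_simp
    _ ≤ ((∑ p, ∑ j, |M p j|) * ‖v - w‖) * h := by
        gcongr
        exact aCoef_diff_bound M Q v w i
    _ = ((∑ p, ∑ j, |M p j|) * h) * ‖v - w‖ := by ring

lemma step_init {N : ℕ} (M : Matrix (Fin N) (Fin N) ℝ) (hM : ∀ i, M i i < 0)
    (Q u0 : Fin N → ℝ) {h : ℝ} (hh : 0 ≤ h) :
    ‖cnStep M Q u0 h u0 - u0‖
      ≤ (∑ p, (-(M p p)) * |aCoef M Q u0 p / (-(M p p)) - u0 p|) * h := by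
  have hD : 0 ≤ ∑ p, (-(M p p)) * |aCoef M Q u0 p / (-(M p p)) - u0 p| :=
    Finset.sum_nonneg fun p _ => mul_nonneg (by linarith [hM p]) (abs_nonneg _)
  rw [pi_norm_le_iff_of_nonneg (by positivity)]
  intro i
  have hm := hM i
  have hmpos : (0:ℝ) < -(M i i) := by linarith
  have key : (cnStep M Q u0 h u0 - u0) i
      = (1 - Real.exp (M i i * h)) * (aCoef M Q u0 i / (-(M i i)) - u0 i) := by
    simp [cnStep]; ring
  rw [Real.norm_eq_abs, key, abs_mul]
  have hE0 : 0 ≤ 1 - Real.exp (M i i * h) := exp_term_nonneg hm hh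
  have hE1 : 1 - Real.exp (M i i * h) ≤ -(M i i) * h := exp_term_le
  calc |1 - Real.exp (M i i * h)| * |aCoef M Q u0 i / (-(M i i)) - u0 i|
      ≤ (-(M i i) * h) * |aCoef M Q u0 i / (-(M i i)) - u0 i| := by
        gcongr
        rwa [abs_of_nonneg hE0]
    _ = ((-(M i i)) * |aCoef M Q u0 i / (-(M i i)) - u0 i|) * h := by ring
    _ ≤ (∑ p, (-(M p p)) * |aCoef M Q u0 p / (-(M p p)) - u0 p|) * h := by
        gcongr
        exact Finset.single_le_sum
          (f := fun p => (-(M p p)) * |aCoef M Q u0 p / (-(M p p)) - u0 p|)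
          (fun p _ => mul_nonneg (by linarith [hM p]) (abs_nonneg _)) (Finset.mem_univ i)

lemma iterate_lip {N : ℕ} (M : Matrix (Fin N) (Fin N) ℝ) (hM : ∀ i, M i i < 0)
    (Q u0 : Fin N → ℝ) {h : ℝ} (hh : 0 ≤ h) (v w : Fin N → ℝ) (n : ℕ) :
    ‖(cnStep M Q u0 h)^[n] v - (cnStep M Q u0 h)^[n] w‖
      ≤ ((∑ p, ∑ j, |M p j|) * h) ^ n * ‖v - w‖ := by
  induction n with
  | zero => simp
  | succ n ih =>
    rw [Function.iterate_succ_apply', Function.iterate_succ_apply']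
    calc ‖cnStep M Q u0 h ((cnStep M Q u0 h)^[n] v)
            - cnStep M Q u0 h ((cnStep M Q u0 h)^[n] w)‖
        ≤ ((∑ p, ∑ j, |M p j|) * h) * ‖(cnStep M Q u0 h)^[n] v - (cnStep M Q u0 h)^[n] w‖ :=
          step_lip M hM Q u0 hh _ _
      _ ≤ ((∑ p, ∑ j, |M p j|) * h) * (((∑ p, ∑ j, |M p j|) * h) ^ n * ‖v - w‖) := by
          gcongr
          try positivity
      _ = ((∑ p, ∑ j, |M p j|) * h) ^ (n + 1) * ‖v - w‖ := by ring

end Aux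

/-- Appendix A, point B: each additional constant-neighbour iteration modifies only
terms of order at least two: `CN_{k+1}(h) − CN_k(h) = O(h²)` as `h → 0⁺`. -/
theorem cn_iteration_difference_second_order {N : ℕ} (hN : 1 ≤ N)
    (M : Matrix (Fin N) (Fin N) ℝ) (hM : ∀ i, M i i < 0) (Q u0 : Fin N → ℝ)
    (k : ℕ) (hk : 1 ≤ k) (i : Fin N) :
    (fun h : ℝ => CN M Q u0 (k + 1) h i - CN M Q u0 k h i)
      =O[nhdsWithin 0 (Set.Ioi 0)] fun h : ℝ => h ^ 2 := by
  set C := ∑ p, ∑ j, |M p j| with hCdef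
  set D := ∑ p, (-(M p p)) * |aCoef M Q u0 p / (-(M p p)) - u0 p| with hDdef
  have hC : 0 ≤ C := Finset.sum_nonneg fun p _ => Finset.sum_nonneg fun j _ => abs_nonneg _
  have hD : 0 ≤ D := Finset.sum_nonneg fun p _ =>
    mul_nonneg (by linarith [hM p]) (abs_nonneg _)
  rw [Asymptotics.isBigO_iff]
  refine ⟨C ^ k * D, ?_⟩
  filter_upwards [Ioo_mem_nhdsGT_of_mem (Set.mem_Ico.mpr ⟨le_refl (0:ℝ), one_pos⟩)] with h hh
  obtain ⟨hh0, hh1⟩ := hh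
  have key : CN M Q u0 (k + 1) h = (cnStep M Q u0 h)^[k] (cnStep M Q u0 h u0) := by
    rw [CN, Function.iterate_succ_apply]
  have bound : ‖CN M Q u0 (k + 1) h - CN M Q u0 k h‖ ≤ (C * h) ^ k * (D * h) := by
    rw [key, CN]
    calc ‖(cnStep M Q u0 h)^[k] (cnStep M Q u0 h u0) - (cnStep M Q u0 h)^[k] u0‖
        ≤ (C * h) ^ k * ‖cnStep M Q u0 h u0 - u0‖ :=
          iterate_lip M hM Q u0 hh0.le _ _ k
      _ ≤ (C * h) ^ k * (D * h) :=
          mul_le_mul_of_nonneg_left (step_init M hM Q u0 hh0.le) (by positivity)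
  have comp : ‖CN M Q u0 (k + 1) h i - CN M Q u0 k h i‖
      ≤ ‖CN M Q u0 (k + 1) h - CN M Q u0 k h‖ :=
    norm_le_pi_norm (CN M Q u0 (k + 1) h - CN M Q u0 k h) i
  have hpow : h ^ (k + 1) ≤ h ^ 2 := pow_le_pow_of_le_one hh0.le hh1.le (by omega)
  calc ‖CN M Q u0 (k + 1) h i - CN M Q u0 k h i‖
      ≤ (C * h) ^ k * (D * h) := comp.trans bound
    _ = C ^ k * D * h ^ (k + 1) := by rw [mul_pow]; ring
    _ ≤ C ^ k * D * h ^ 2 := by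
        exact mul_le_mul_of_nonneg_left hpow (by positivity)
    _ = C ^ k * D * ‖h ^ 2‖ := by rw [Real.norm_eq_abs, abs_of_nonneg (by positivity)]
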